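/- arXiv:1601.02419 — 2 statements merged into one kernel-verified Lean document; each statement's English description precedes it below -/
import Mathlib

section
/- In the setting of the previous statement, define for ε ∈ ℝ the one-parameter family Q_ε := e^{−mεΥ}(Q + εPΥ), μ_ε := e^{mεΥ}μ, and Q′_ε implicitly by ∫ Q′_ε dμ_ε = ∫ Q′ dμ + 2ε∫ Υ Q dμ + 2∫ Υ Q_ε dμ_ε. Then the derivative at ε = 0 satisfies (d/dε)|_{ε=0} ∫_M Q′_ε dμ_ε = 4 ∫_M Υ Q dμ. -/
open MeasureTheory

/-- The total Q-prime curvature is a conformal primitive of the Q-curvature: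
with `Q_ε := e^{−mεΥ}(Q + εPΥ)`, `μ_ε := e^{mεΥ}μ` and `∫ Q′_ε dμ_ε` given by the
transformation law
`∫ Q′_ε dμ_ε = ∫ Q′ dμ + 2ε∫ΥQ dμ + 2∫ (εΥ) Q_ε dμ_ε`,
one has `(d/dε)|₀ ∫ Q′_ε dμ_ε = 4∫ ΥQ dμ`. -/
theorem stmt4 {M : Type*} [MeasurableSpace M] (μ : Measure M) (m : ℝ)
    (P : (M → ℝ) → (M → ℝ)) (Υ Q Q' : M → ℝ)
    (hΥb : ∃ C : ℝ, ∀ p, |Υ p| ≤ C)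
    (hiΥQ : Integrable (fun p => Υ p * Q p) μ)
    (hiΥPΥ : Integrable (fun p => Υ p * P Υ p) μ) :
    HasDerivAt
      (fun ε : ℝ =>
        (∫ p, Q' p ∂μ) + 2 * ε * (∫ p, Υ p * Q p ∂μ)
          + 2 * ∫ p, (ε * Υ p)
              * (Real.exp (-(m * ε) * Υ p) * (Q p + ε * P Υ p))
              * Real.exp ((m * ε) * Υ p) ∂μ)
      (4 * ∫ p, Υ p * Q p ∂μ) 0 := by
  set A := ∫ p, Υ p * Q p ∂μ with hA
  set B := ∫ p, Υ p * P Υ p ∂μ with hB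
  have key : ∀ ε : ℝ,
      (∫ p, (ε * Υ p)
          * (Real.exp (-(m * ε) * Υ p) * (Q p + ε * P Υ p))
          * Real.exp ((m * ε) * Υ p) ∂μ) = ε * A + ε ^ 2 * B := by
    intro ε
    have hpt : ∀ p, (ε * Υ p)
        * (Real.exp (-(m * ε) * Υ p) * (Q p + ε * P Υ p))
        * Real.exp ((m * ε) * Υ p)
        = ε * (Υ p * Q p) + ε ^ 2 * (Υ p * P Υ p) := by
      intro p
      have h : Real.exp (-(m * ε) * Υ p) * Real.exp ((m * ε) * Υ p) = 1 := by
        rw [← Real.exp_add]; ring_nf; exact Real.exp_zero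
      linear_combination (ε * Υ p * (Q p + ε * P Υ p)) * h
    simp only [hpt]
    rw [integral_add (hiΥQ.const_mul ε) (hiΥPΥ.const_mul (ε ^ 2)),
      integral_const_mul, integral_const_mul]
  have hfun : (fun ε : ℝ =>
      (∫ p, Q' p ∂μ) + 2 * ε * A
        + 2 * ∫ p, (ε * Υ p)
            * (Real.exp (-(m * ε) * Υ p) * (Q p + ε * P Υ p))
            * Real.exp ((m * ε) * Υ p) ∂μ)
      = fun ε : ℝ => (∫ p, Q' p ∂μ) + 2 * ε * A + 2 * (ε * A + ε ^ 2 * B) := by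
    funext ε; rw [key ε]
  rw [hfun]
  have h : HasDerivAt (fun ε : ℝ => (∫ p, Q' p ∂μ) + 2 * ε * A + 2 * (ε * A + ε ^ 2 * B))
      (0 + 2 * A + 2 * (A + 2 * 0 * B)) 0 := by
    apply HasDerivAt.add
    · apply HasDerivAt.add
      · simpa using (hasDerivAt_const (0:ℝ) (∫ p, Q' p ∂μ))
      · simpa [mul_comm, mul_assoc] using ((hasDerivAt_id (0:ℝ)).const_mul 2).mul_const A
    · have h1 : HasDerivAt (fun ε : ℝ => ε * A + ε ^ 2 * B) (A + 2 * 0 * B) 0 := by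
        apply HasDerivAt.add
        · simpa using (hasDerivAt_id (0:ℝ)).mul_const A
        · simpa using ((hasDerivAt_pow 2 (0:ℝ)).mul_const B)
      simpa using h1.const_mul 2
  convert h using 1
  ring
end

section
/- Let A be a commutative ring, let R = A[[t]] be a graded module of formal series Σ_{j≥0} f_j t^{j/2} in half-integer powers of t with coefficients f_j ∈ A, and let m ≥ 1 be an integer. Let L : R → R be an A-linear map satisfying the indicial property: for every f ∈ A and every integer j ≥ 0, L(f·t^{j/2}) ≡ −(1/4)·j·(j − 2m)·f·t^{j/2} modulo t^{(j+1)/2}·R. Then for every f₀ ∈ A ⊗ ℚ there exist f₁, …, f_{2m−1} ∈ A ⊗ ℚ such that L(Σ_{j=0}^{2m−1} f_j t^{j/2}) ∈ t^m·R ⊗ ℚ. Moreover the f_j for 1 ≤ j ≤ 2m−1 are uniquely determined by f₀. -/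
noncomputable section

def dCoef (m j : ℕ) : ℚ := (-(1 / 4 : ℚ)) * (j : ℚ) * ((j : ℚ) - 2 * (m : ℚ))

lemma dCoef_ne (m j : ℕ) (h0 : 0 < j) (h2 : j < 2 * m) : dCoef m j ≠ 0 := by
  have h1 : (j : ℚ) ≠ 0 := by exact_mod_cast h0.ne'
  have h3 : (j : ℚ) - 2 * m ≠ 0 := by
    have : (j : ℚ) < 2 * m := by exact_mod_cast h2
    exact sub_ne_zero.mpr this.ne
  exact mul_ne_zero (mul_ne_zero (by norm_num) h1) h3

def sol {A : Type*} [CommRing A] [Algebra ℚ A] (m : ℕ)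
    (L : (ℕ → A) →ₗ[A] (ℕ → A)) (f₀ : A) : ℕ → A
  | 0 => f₀
  | (i + 1) =>
    if i + 1 < 2 * m then
      (dCoef m (i + 1))⁻¹ •
        (- ∑ j ∈ (Finset.range (i + 1)).attach,
            L (fun i' => if i' = (j : ℕ) then sol m L f₀ j else 0) (i + 1))
    else 0
  termination_by i => i
  decreasing_by exact Finset.mem_range.mp j.2

/-- Key decomposition of `L g i` for `g` supported below `2m` and `i < 2m`. -/
lemma keyLem {A : Type*} [CommRing A] [Algebra ℚ A] (m : ℕ)
    (L : (ℕ → A) →ₗ[A] (ℕ → A))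
    (hL : ∀ (f : A) (j i : ℕ), i ≤ j →
      L (fun i' => if i' = j then f else 0) i
        = if i = j then ((-(1 / 4 : ℚ)) * (j : ℚ) * ((j : ℚ) - 2 * (m : ℚ))) • f else 0)
    (g : ℕ → A) (hg : ∀ j, 2 * m ≤ j → g j = 0) (i : ℕ) (hi : i < 2 * m) :
    L g i = (∑ j ∈ Finset.range i,
        L (fun i' => if i' = j then g j else 0) i) + (dCoef m i) • g i := by
  have hgdec : g = ∑ j ∈ Finset.range (2 * m),
      (fun i' => if i' = j then g j else 0) := by
    funext i'
    simp only [Finset.sum_apply, Finset.sum_ite_eq, Finset.mem_range]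
    by_cases h : i' < 2 * m
    · simp [h]
    · simp [h, hg i' (le_of_not_gt h)]
  have hsplit : Finset.range (2 * m) = Finset.range i ∪ Finset.Ico i (2 * m) := by
    ext a
    simp only [Finset.mem_union, Finset.mem_range, Finset.mem_Ico]
    omega
  have hdisj : Disjoint (Finset.range i) (Finset.Ico i (2 * m)) := by
    simp [Finset.disjoint_left, Finset.mem_range, Finset.mem_Ico]
    intro a ha h; omega
  calc L g i
      = ∑ j ∈ Finset.range (2 * m),
          L (fun i' => if i' = j then g j else 0) i := by
        conv_lhs => rw [hgdec]
        rw [map_sum]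
        simp [Finset.sum_apply]
    _ = (∑ j ∈ Finset.range i, L (fun i' => if i' = j then g j else 0) i)
        + ∑ j ∈ Finset.Ico i (2 * m),
            L (fun i' => if i' = j then g j else 0) i := by
        rw [hsplit, Finset.sum_union hdisj]
    _ = _ := by
        congr 1
        have : ∀ j ∈ Finset.Ico i (2 * m),
            L (fun i' => if i' = j then g j else 0) i
              = if i = j then (dCoef m j) • g j else 0 := by
          intro j hj
          exact hL (g j) j i (Finset.mem_Ico.mp hj).1
        rw [Finset.sum_congr rfl this, Finset.sum_ite_eq]
        simp [Finset.mem_Ico, hi]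

end

/-- Formal solution of the Dirichlet problem up to the indicial root.  We model
`R = A[[t^{1/2}]]` by coefficient sequences `ℕ → A` (index `j` standing for `t^{j/2}`),
`A` a commutative ℚ-algebra.  If the `A`-linear operator `L` satisfies the indicial
property `L(f·t^{j/2}) ≡ −(1/4)j(j−2m)·f·t^{j/2} mod t^{(j+1)/2}`, then for every `f₀`
there exist unique `f₁, …, f_{2m−1}` with
`L(Σ_{j<2m} f_j t^{j/2}) ∈ t^m·R` (i.e. all coefficients of index `< 2m` vanish). -/
theorem stmt11 {A : Type*} [CommRing A] [Algebra ℚ A] (m : ℕ) (hm : 1 ≤ m)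
    (L : (ℕ → A) →ₗ[A] (ℕ → A))
    (hL : ∀ (f : A) (j i : ℕ), i ≤ j →
      L (fun i' => if i' = j then f else 0) i
        = if i = j then ((-(1 / 4 : ℚ)) * (j : ℚ) * ((j : ℚ) - 2 * (m : ℚ))) • f else 0) :
    ∀ f₀ : A, ∃! f : ℕ → A,
      f 0 = f₀ ∧ (∀ j, 2 * m ≤ j → f j = 0) ∧ (∀ i, i < 2 * m → L f i = 0) := by
  intro f₀
  set s := sol m L f₀ with hs
  have hs0 : s 0 = f₀ := by rw [hs, sol]
  have hsupp : ∀ j, 2 * m ≤ j → s j = 0 := by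
    intro j hj
    match j, hj with
    | (i + 1), hj =>
      rw [hs, sol]
      simp [Nat.not_lt.mpr hj]
    | 0, hj => omega
  -- value of s at i+1 < 2m
  have hval : ∀ i, i + 1 < 2 * m →
      s (i + 1) = (dCoef m (i + 1))⁻¹ •
        (- ∑ j ∈ Finset.range (i + 1),
            L (fun i' => if i' = j then s j else 0) (i + 1)) := by
    intro i hi
    rw [hs, sol, if_pos hi]
    congr 1
    congr 1
    rw [← Finset.sum_attach (Finset.range (i + 1))
      (fun j => L (fun i' => if i' = j then s j else 0) (i + 1))]
  have hLs : ∀ i, i < 2 * m → L s i = 0 := by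
    intro i hi
    rw [keyLem m L hL s hsupp i hi]
    match i with
    | 0 =>
      simp [dCoef]
    | (i + 1) =>
      rw [hval i hi, smul_smul, mul_inv_cancel₀ (dCoef_ne m (i+1) (Nat.succ_pos i) hi),
        one_smul]
      simp
  refine ⟨s, ⟨hs0, hsupp, hLs⟩, ?_⟩
  rintro g ⟨hg0, hgsupp, hgL⟩
  funext i
  induction i using Nat.strong_induction_on with
  | _ i ih =>
    match i with
    | 0 => rw [hg0, hs0]
    | (i + 1) =>
      by_cases hi : i + 1 < 2 * m
      · have hkey := keyLem m L hL g hgsupp (i + 1) hi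
        rw [hgL (i + 1) hi] at hkey
        have hsums : (∑ j ∈ Finset.range (i + 1),
            L (fun i' => if i' = j then g j else 0) (i + 1))
            = ∑ j ∈ Finset.range (i + 1),
            L (fun i' => if i' = j then s j else 0) (i + 1) := by
          refine Finset.sum_congr rfl fun j hj => ?_
          rw [ih j (Finset.mem_range.mp hj)]
        have : (dCoef m (i + 1)) • g (i + 1)
            = - ∑ j ∈ Finset.range (i + 1),
                L (fun i' => if i' = j then s j else 0) (i + 1) := by
          rw [← hsums]; linear_combination (norm := module) -hkey
        have h2 : g (i + 1) = (dCoef m (i + 1))⁻¹ •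
            (- ∑ j ∈ Finset.range (i + 1),
                L (fun i' => if i' = j then s j else 0) (i + 1)) := by
          rw [← this, smul_smul,
            inv_mul_cancel₀ (dCoef_ne m (i+1) (Nat.succ_pos i) hi), one_smul]
        rw [h2, hval i hi]
      · rw [hgsupp _ (le_of_not_gt hi), hsupp _ (le_of_not_gt hi)]
end
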